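/- For every integer N ≥ 1 and complex numbers x₁,…,x_N, y₁,…,y_N with sinh((x_i − y_j)/2) ≠ 0 for all i, j, the Cauchy-type determinant evaluation holds: det_{1≤j,k≤N} [ coth((x_k − y_j)/2) ] = cosh( (∑_{ℓ=1}^N (x_ℓ − y_ℓ))/2 ) · ∏_{1≤i<j≤N} [ sinh((x_i − x_j)/2) · sinh((y_j − y_i)/2) ] / ∏_{i,j=1}^N sinh((x_i − y_j)/2), where in the matrix j is the row index and k the column index. -/

import Mathlib

open Complex Finset

noncomputable def coth (u : ℂ) : ℂ := Complex.cosh u / Complex.sinh u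

section Aux
open Matrix

section H

variable {M : Type*} [CommMonoid M]

lemma Ioi_castSucc'' {n : ℕ} (i : Fin n) :
    Ioi (i.castSucc) = insert (Fin.last n) ((Ioi i).map Fin.castSuccEmb) := by
  ext j
  induction j using Fin.lastCases with
  | last => simp [Fin.castSucc_lt_last]
  | cast j =>
      simp only [Finset.mem_Ioi, Finset.mem_insert, Finset.mem_map,
        Fin.castSucc_lt_castSucc_iff]
      constructor
      · intro h; exact Or.inr ⟨j, by simpa using h, rfl⟩
      · rintro (h | ⟨a, ha, e⟩)
        · exact absurd h (Fin.castSucc_lt_last j).ne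
        · have : a.castSucc = j.castSucc := e
          rw [Fin.castSucc_inj] at this; subst this; simpa using ha

lemma prod_Ioi_castSucc {n : ℕ} (i : Fin n) (g : Fin (n+1) → M) :
    ∏ j ∈ Ioi i.castSucc, g j = (∏ j ∈ Ioi i, g j.castSucc) * g (Fin.last n) := by
  rw [Ioi_castSucc'', Finset.prod_insert (by simp only [Finset.mem_map, not_exists]; rintro a ⟨-, e⟩; exact (Fin.castSucc_lt_last a).ne (e : a.castSucc = Fin.last n)), Finset.prod_map]
  rw [mul_comm]; rfl

lemma prod_pairs_succ {n : ℕ} (f : Fin (n+1) → Fin (n+1) → M) :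
    ∏ i, ∏ j ∈ Ioi i, f i j =
      ((∏ i : Fin n, ∏ j ∈ Ioi i, f i.castSucc j.castSucc) *
        ∏ i : Fin n, f i.castSucc (Fin.last n)) := by
  rw [Fin.prod_univ_castSucc]
  have : Ioi (Fin.last n) = ∅ := by
    ext j; simp [Fin.le_last j, not_lt.2]
  rw [this, Finset.prod_empty, mul_one, ← Finset.prod_mul_distrib]
  exact Finset.prod_congr rfl fun i _ => prod_Ioi_castSucc i _

variable {R : Type*} [CommRing R]

lemma det_smul_rows_cols {m : ℕ} (v w : Fin m → R) (A : Matrix (Fin m) (Fin m) R) :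
    Matrix.det (Matrix.of fun i j => v i * w j * A i j) =
      (∏ i, v i) * (∏ j, w j) * A.det := by
  have h1 : (Matrix.of fun i j => v i * w j * A i j) =
      Matrix.of (fun i j => v i * (Matrix.of fun i j => w j * A i j) i j) := by
    ext i j; simp [mul_assoc]
  rw [h1, Matrix.det_mul_column, Matrix.det_mul_row]; ring

lemma det_expand_last {n : ℕ} (A : Matrix (Fin (n+1)) (Fin (n+1)) R)
    (h : ∀ j, j ≠ Fin.last n → A j (Fin.last n) = 0) :
    A.det = A (Fin.last n) (Fin.last n) *
      (A.submatrix Fin.castSucc Fin.castSucc).det := by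
  rw [Matrix.det_succ_column A (Fin.last n)]
  rw [Finset.sum_eq_single (Fin.last n)]
  · rw [Fin.succAbove_last]
    have : (-1 : R) ^ ((Fin.last n : ℕ) + (Fin.last n : ℕ)) = 1 := by
      rw [← two_mul, pow_mul]; norm_num
    rw [this, one_mul]
  · intro i _ hi
    rw [h i hi]; ring
  · simp

-- column operations: subtract last column from all others
lemma det_sub_last_col {n : ℕ} (A : Matrix (Fin (n+1)) (Fin (n+1)) R) :
    Matrix.det (Matrix.of fun j k =>
      A j k - (if k = Fin.last n then 0 else A j (Fin.last n))) = A.det := by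
  rw [← Matrix.det_transpose A, ← Matrix.det_transpose]
  apply Matrix.det_eq_of_forall_row_eq_smul_add_const
    (fun k => if k = Fin.last n then 0 else (-1 : R)) (Fin.last n) (by simp)
  intro k j
  by_cases hk : k = Fin.last n <;> simp [hk, sub_eq_add_neg]

-- row operations: subtract last row from all others
lemma det_sub_last_row {n : ℕ} (A : Matrix (Fin (n+1)) (Fin (n+1)) R) :
    Matrix.det (Matrix.of fun j k =>
      A j k - (if j = Fin.last n then 0 else A (Fin.last n) k)) = A.det := by
  apply Matrix.det_eq_of_forall_row_eq_smul_add_const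
    (fun j => if j = Fin.last n then 0 else (-1 : R)) (Fin.last n) (by simp)
  intro j k
  by_cases hj : j = Fin.last n <;> simp [hj, sub_eq_add_neg]
lemma det_expand_last_row {n : ℕ} (A : Matrix (Fin (n+1)) (Fin (n+1)) R)
    (h : ∀ k, k ≠ Fin.last n → A (Fin.last n) k = 0) :
    A.det = A (Fin.last n) (Fin.last n) *
      (A.submatrix Fin.castSucc Fin.castSucc).det := by
  rw [← Matrix.det_transpose A, det_expand_last Aᵀ (fun j hj => h j hj)]
  rw [← Matrix.det_transpose (Aᵀ.submatrix Fin.castSucc Fin.castSucc)]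
  rfl
end H
lemma cauchy_det : ∀ (n : ℕ) (a b : Fin n → ℂ), (∀ i j, a i ≠ b j) →
    Matrix.det (Matrix.of fun j k => (a k - b j)⁻¹) =
      (∏ i, ∏ j ∈ Ioi i, ((a i - a j) * (b j - b i))) / (∏ i, ∏ j, (a i - b j)) := by
  intro n
  induction n with
  | zero => intro a b _; simp [Matrix.det_fin_zero]
  | succ n IH =>
    intro a b hab
    set L := Fin.last n with hL
    have hsub : ∀ (i j : Fin (n+1)), a i - b j ≠ 0 := fun i j => sub_ne_zero.mpr (hab i j)
    -- the factored matrices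
    set v : Fin (n+1) → ℂ := fun j => (a L - b j)⁻¹ with hv
    set u : Fin (n+1) → ℂ := fun k => if k = L then 1 else (a L - a k) with hu
    set D : Matrix (Fin (n+1)) (Fin (n+1)) ℂ :=
      Matrix.of (fun j k => if k = L then 1 else (a k - b j)⁻¹) with hD
    set w : Fin (n+1) → ℂ := fun j => if j = L then 1 else (b j - b L) with hw
    set z : Fin (n+1) → ℂ := fun k => if k = L then 1 else (a k - b L)⁻¹ with hz
    set F : Matrix (Fin (n+1)) (Fin (n+1)) ℂ :=
      Matrix.of (fun j k =>
        if k = L then (if j = L then 1 else 0)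
        else if j = L then 1 else (a k - b j)⁻¹) with hF
    have step1 : Matrix.det (Matrix.of fun j k : Fin (n+1) => (a k - b j)⁻¹) =
        (∏ i, v i) * (∏ i, u i) * D.det := by
      rw [← det_sub_last_col (Matrix.of fun j k : Fin (n+1) => (a k - b j)⁻¹),
        ← det_smul_rows_cols v u D]
      congr 1
      ext j k
      by_cases hk : k = L
      · simp [hk, hv, hu, hD, ← hL]
      · simp only [Matrix.of_apply, hk, if_false, hv, hu, hD, ← hL]
        field_simp [hsub k j, hsub L j]
        try ring
        try exact Or.inl trivial
    have step2 : D.det = (∏ i, w i) * (∏ i, z i) * F.det := by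
      rw [← det_sub_last_row D, ← det_smul_rows_cols w z F]
      congr 1
      ext j k
      by_cases hj : j = L
      · by_cases hk : k = L <;> simp [hj, hk, hw, hz, hD, hF, ← hL]
      · by_cases hk : k = L
        · simp [hj, hk, hw, hz, hD, hF, ← hL]
        · simp only [Matrix.of_apply, hj, hk, if_false, hw, hz, hD, hF, ← hL]
          field_simp [hsub k j, hsub k L]
          try ring
          try exact Or.inl trivial
    have step3 : F.det =
        Matrix.det (Matrix.of fun j k : Fin n =>
          ((a ∘ Fin.castSucc) k - (b ∘ Fin.castSucc) j)⁻¹) := by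
      rw [det_expand_last F (fun j hj => by simp [hF, hj, hL])]
      have : F L L = 1 := by simp [hF]
      rw [this, one_mul]
      congr 1
      ext j k
      simp [hF, (Fin.castSucc_lt_last k).ne, (Fin.castSucc_lt_last j).ne, hL]
    rw [step1, step2, step3, IH (a ∘ Fin.castSucc) (b ∘ Fin.castSucc) (fun i j => hab _ _)]
    simp only [Function.comp_apply]
    -- now pure product bookkeeping
    have hvprod : (∏ i, v i) = ((∏ j : Fin n, (a L - b j.castSucc)) * (a L - b L))⁻¹ := by
      rw [hv, Fin.prod_univ_castSucc, mul_inv, Finset.prod_inv_distrib]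
    have huprod : (∏ i, u i) = ∏ k : Fin n, (a L - a k.castSucc) := by
      rw [hu, Fin.prod_univ_castSucc]
      simp [(Fin.castSucc_lt_last _).ne, hL]
    have hwprod : (∏ i, w i) = ∏ j : Fin n, (b j.castSucc - b L) := by
      rw [hw, Fin.prod_univ_castSucc]
      simp [(Fin.castSucc_lt_last _).ne, hL]
    have hzprod : (∏ i, z i) = (∏ k : Fin n, (a k.castSucc - b L))⁻¹ := by
      rw [hz, Fin.prod_univ_castSucc,
        Finset.prod_congr rfl (fun (i : Fin n) _ =>
          if_neg (Fin.castSucc_lt_last i).ne : ∀ i ∈ Finset.univ, _ = (a i.castSucc - b L)⁻¹),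
        Finset.prod_inv_distrib]
      simp [hL]
    rw [hvprod, huprod, hwprod, hzprod]
    -- split target products
    rw [prod_pairs_succ (fun i j => (a i - a j) * (b j - b i))]
    have hden : (∏ i : Fin (n+1), ∏ j : Fin (n+1), (a i - b j)) =
        ((∏ i : Fin n, ∏ j : Fin n, (a i.castSucc - b j.castSucc)) *
          (∏ i : Fin n, (a i.castSucc - b L))) *
          ((∏ j : Fin n, (a L - b j.castSucc)) * (a L - b L)) := by
      rw [Fin.prod_univ_castSucc (f := fun i => ∏ j : Fin (n+1), (a i - b j))]
      rw [Fin.prod_univ_castSucc (f := fun j => (a L - b j))]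
      rw [← Finset.prod_mul_distrib]
      congr 1
      exact Finset.prod_congr rfl fun i _ => by
        rw [Fin.prod_univ_castSucc (f := fun j => (a i.castSucc - b j))]
    rw [hden]
    -- abbreviate
    set P := ∏ i : Fin n, ∏ j ∈ Ioi i, ((a i.castSucc - a j.castSucc) * (b j.castSucc - b i.castSucc)) with hP
    set Q := ∏ i : Fin n, ∏ j : Fin n, (a i.castSucc - b j.castSucc) with hQ
    set A1 := ∏ k : Fin n, (a L - a k.castSucc) with hA1
    set W1 := ∏ j : Fin n, (b j.castSucc - b L) with hW1
    set Z1 := ∏ k : Fin n, (a k.castSucc - b L) with hZ1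
    set X1 := ∏ j : Fin n, (a L - b j.castSucc) with hX1
    have hpair : (∏ i : Fin n, ((a i.castSucc - a L) * (b L - b i.castSucc))) = A1 * W1 := by
      rw [hA1, hW1, ← Finset.prod_mul_distrib]
      exact Finset.prod_congr rfl fun i _ => by ring
    rw [hpair]
    have hQ0 : Q ≠ 0 := Finset.prod_ne_zero_iff.mpr fun i _ =>
      Finset.prod_ne_zero_iff.mpr fun j _ => hsub _ _
    have hZ0 : Z1 ≠ 0 := Finset.prod_ne_zero_iff.mpr fun i _ => hsub _ _
    have hX0 : X1 ≠ 0 := Finset.prod_ne_zero_iff.mpr fun i _ => hsub _ _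
    have hlast : a L - b L ≠ 0 := hsub _ _
    field_simp

lemma ones_cauchy_det (n : ℕ) (u β : Fin (n+1) → ℂ)
    (hne : ∀ (k : Fin (n+1)) (j : Fin n), u k ≠ β j.castSucc) :
    Matrix.det (Matrix.of fun j k : Fin (n+1) =>
        if j = Fin.last n then 1 else (u k - β j)⁻¹) =
      (∏ k : Fin n, (u (Fin.last n) - u k.castSucc)) *
      (∏ j : Fin n, (u (Fin.last n) - β j.castSucc))⁻¹ *
      Matrix.det (Matrix.of fun j k : Fin n => (u k.castSucc - β j.castSucc)⁻¹) := by
  set L := Fin.last n with hL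
  set K : Matrix (Fin (n+1)) (Fin (n+1)) ℂ :=
    Matrix.of (fun j k => if j = L then 1 else (u k - β j)⁻¹) with hK
  set v : Fin (n+1) → ℂ := fun j => if j = L then 1 else (u L - β j)⁻¹ with hv
  set w : Fin (n+1) → ℂ := fun k => if k = L then 1 else (u L - u k) with hw
  set F : Matrix (Fin (n+1)) (Fin (n+1)) ℂ :=
    Matrix.of (fun j k =>
      if j = L then (if k = L then 1 else 0)
      else if k = L then 1 else (u k - β j)⁻¹) with hF
  have hsub : ∀ (k : Fin (n+1)) (j : Fin n), u k - β j.castSucc ≠ 0 :=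
    fun k j => sub_ne_zero.mpr (hne k j)
  have step1 : K.det = (∏ i, v i) * (∏ i, w i) * F.det := by
    rw [← det_sub_last_col K, ← det_smul_rows_cols v w F]
    congr 1
    ext j k
    by_cases hj : j = L
    · by_cases hk : k = L <;> simp [hj, hk, hv, hw, hK, hF, ← hL]
    · obtain ⟨j0, rfl⟩ := Fin.exists_castSucc_eq.mpr hj
      by_cases hk : k = L
      · simp [hj, hk, hv, hw, hK, hF, ← hL]
      · simp only [Matrix.of_apply, hj, hk, if_false, hv, hw, hK, hF, ← hL]
        field_simp [hsub k j0, hsub L j0]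
        try ring
        try exact Or.inl trivial
  have step2 : F.det = Matrix.det (Matrix.of fun j k : Fin n =>
      (u k.castSucc - β j.castSucc)⁻¹) := by
    rw [det_expand_last_row F (fun k hk => by simp [hF, hk, hL])]
    have : F L L = 1 := by simp [hF]
    rw [this, one_mul]
    congr 1
    ext j k
    simp [hF, (Fin.castSucc_lt_last k).ne, (Fin.castSucc_lt_last j).ne, hL]
  have hvprod : (∏ i, v i) = (∏ j : Fin n, (u L - β j.castSucc))⁻¹ := by
    rw [hv, Fin.prod_univ_castSucc,
      Finset.prod_congr rfl (fun (i : Fin n) _ =>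
        if_neg (Fin.castSucc_lt_last i).ne : ∀ i ∈ Finset.univ, _ = (u L - β i.castSucc)⁻¹),
      Finset.prod_inv_distrib]
    simp [hL]
  have hwprod : (∏ i, w i) = ∏ k : Fin n, (u L - u k.castSucc) := by
    rw [hw, Fin.prod_univ_castSucc]
    simp [(Fin.castSucc_lt_last _).ne, hL]
  rw [step1, step2, hvprod, hwprod]
  ring

set_option maxHeartbeats 2000000 in
theorem coth_det_algebraic (n : ℕ) (a b : Fin (n+1) → ℂ)
    (hb : ∀ j, b j ≠ 0) (hab : ∀ i j, a i ≠ b j) :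
    Matrix.det (Matrix.of fun j k : Fin (n+1) => (a k + b j) / (a k - b j)) =
      2 ^ n * ((∏ i, a i) + ∏ i, b i) *
        (∏ i, ∏ j ∈ Ioi i, ((a i - a j) * (b j - b i))) /
        (∏ i, ∏ j, (a i - b j)) := by
  set L := Fin.last n with hL
  have hsub : ∀ (i j : Fin (n+1)), a i - b j ≠ 0 := fun i j => sub_ne_zero.mpr (hab i j)
  set v : Fin (n+1) → ℂ := fun j => b j * (a L - b j)⁻¹ with hv
  set u : Fin (n+1) → ℂ := fun k => if k = L then 1 else 2 * (a L - a k) with hu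
  set G : Matrix (Fin (n+1)) (Fin (n+1)) ℂ :=
    Matrix.of (fun j k => if k = L then (a L + b j) * (b j)⁻¹ else (a k - b j)⁻¹) with hG
  set w : Fin (n+1) → ℂ := fun j => if j = L then 1 else (b j - b L) with hw
  set z : Fin (n+1) → ℂ := fun k => if k = L then 1 else (a k - b L)⁻¹ with hz
  set H : Matrix (Fin (n+1)) (Fin (n+1)) ℂ :=
    Matrix.of (fun j k =>
      if k = L then (if j = L then (a L + b L) * (b L)⁻¹ else -(a L) * ((b j) * (b L))⁻¹)
      else (if j = L then 1 else (a k - b j)⁻¹)) with hH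
  have step1 : Matrix.det (Matrix.of fun j k : Fin (n+1) => (a k + b j) / (a k - b j)) =
      (∏ i, v i) * (∏ i, u i) * G.det := by
    rw [← det_sub_last_col (Matrix.of fun j k : Fin (n+1) => (a k + b j) / (a k - b j)),
      ← det_smul_rows_cols v u G]
    congr 1
    ext j k
    by_cases hk : k = L
    · simp only [Matrix.of_apply, hk, if_pos rfl, hv, hu, hG, if_true, ← hL]
      field_simp [hb j, hsub L j]
      try ring
      try exact Or.inl trivial
    · simp only [Matrix.of_apply, hk, if_false, hv, hu, hG, ← hL]
      field_simp [hb j, hsub k j, hsub L j]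
      try ring
      try exact Or.inl trivial
  have step2 : G.det = (∏ i, w i) * (∏ i, z i) * H.det := by
    rw [← det_sub_last_row G, ← det_smul_rows_cols w z H]
    congr 1
    ext j k
    by_cases hj : j = L
    · by_cases hk : k = L <;> simp [hj, hk, hw, hz, hG, hH, ← hL]
    · by_cases hk : k = L
      · simp only [Matrix.of_apply, hj, hk, if_false, if_pos rfl, hw, hz, hG, hH, if_true, ← hL]
        field_simp [hb j, hb L]
        try ring
        try exact Or.inl trivial
      · simp only [Matrix.of_apply, hj, hk, if_false, hw, hz, hG, hH, ← hL]
        field_simp [hsub k j, hsub k L]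
        try ring
        try exact Or.inl trivial
  -- split the last column of H
  set C : ℂ := Matrix.det (Matrix.of fun j k : Fin n =>
    (a k.castSucc - b j.castSucc)⁻¹) with hC
  set c1 : Fin (n+1) → ℂ :=
    fun j => if j = L then a L * (b L)⁻¹ else a L * (b L)⁻¹ * (0 - b j)⁻¹ with hc1
  set c2 : Fin (n+1) → ℂ := fun j => if j = L then 1 else 0 with hc2
  have hHcol : H = Matrix.updateCol H L (c1 + c2) := by
    have : (c1 + c2) = fun j => H j L := by
      funext j
      by_cases hj : j = L
      · simp only [Pi.add_apply, hc1, hc2, hj, if_pos rfl, hH, Matrix.of_apply, if_true]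
        field_simp [hb L]
        try ring
      · simp only [Pi.add_apply, hc1, hc2, hj, if_false, hH, Matrix.of_apply, if_pos rfl, add_zero, ← hL, if_true]
        field_simp [hb j, hb L]
        try ring
        try exact Or.inl trivial
    rw [this, Matrix.updateCol_eq_self]
  have term2 : (Matrix.updateCol H L c2).det = C := by
    rw [det_expand_last _ (fun j hj => by simp [Matrix.updateCol_apply, hc2, hj, hL])]
    have h11 : (Matrix.updateCol H L c2) L L = 1 := by
      simp [Matrix.updateCol_apply, hc2]
    rw [h11, one_mul, hC]
    congr 1
    ext j k
    simp [Matrix.updateCol_apply, (Fin.castSucc_lt_last k).ne, (Fin.castSucc_lt_last j).ne, hH, hL]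
  set u' : Fin (n+1) → ℂ := fun k => if k = L then 0 else a k with hu'
  have term1 : (Matrix.updateCol H L c1).det =
      a L * (b L)⁻¹ * ((∏ k : Fin n, (0 - a k.castSucc)) *
        (∏ j : Fin n, (0 - b j.castSucc))⁻¹ * C) := by
    have hrepr : Matrix.updateCol H L c1 =
        Matrix.of (fun j k => (if k = L then a L * (b L)⁻¹ else 1) *
          (Matrix.of fun j k : Fin (n+1) =>
            if j = L then 1 else (u' k - b j)⁻¹) j k) := by
      ext j k
      by_cases hk : k = L
      · by_cases hj : j = L <;>
          simp [Matrix.updateCol_apply, hk, hj, hc1, hu']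
      · by_cases hj : j = L <;>
          simp [Matrix.updateCol_apply, hk, hj, hH, hu']
    rw [hrepr]
    have : Matrix.of (fun j k => (if k = L then a L * (b L)⁻¹ else 1) *
          (Matrix.of fun j k : Fin (n+1) =>
            if j = L then 1 else (u' k - b j)⁻¹) j k) =
        Matrix.of (fun (j k : Fin (n+1)) => (fun k => if k = L then a L * (b L)⁻¹ else 1) k *
          (Matrix.of fun j k : Fin (n+1) =>
            if j = L then 1 else (u' k - b j)⁻¹) j k) := rfl
    rw [this, Matrix.det_mul_row]
    have hprodite : (∏ k : Fin (n+1), (if k = L then a L * (b L)⁻¹ else 1)) =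
        a L * (b L)⁻¹ := by
      rw [Fin.prod_univ_castSucc]
      simp [(Fin.castSucc_lt_last _).ne, hL]
    rw [hprodite]
    have hne' : ∀ (k : Fin (n+1)) (j : Fin n), u' k ≠ b j.castSucc := by
      intro k j
      by_cases hk : k = L
      · simp only [hu', hk, if_pos rfl]
        exact (hb _).symm
      · simp only [hu', hk, if_false]
        exact hab _ _
    rw [ones_cauchy_det n u' b hne']
    have e1 : (∏ k : Fin n, (u' L - u' k.castSucc)) = ∏ k : Fin n, (0 - a k.castSucc) := by
      apply Finset.prod_congr rfl
      intro k _
      simp [hu', (Fin.castSucc_lt_last k).ne, hL]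
    have e2 : (∏ j : Fin n, (u' L - b j.castSucc)) = ∏ j : Fin n, (0 - b j.castSucc) := by
      apply Finset.prod_congr rfl
      intro j _
      simp [hu']
    have e3 : Matrix.det (Matrix.of fun j k : Fin n => (u' k.castSucc - b j.castSucc)⁻¹) = C := by
      rw [hC]
      congr 1
      ext j k
      simp [hu', (Fin.castSucc_lt_last k).ne, hL]
    rw [e1, e2, e3]
    try ring
  have stepH : H.det = ((∏ i, a i) + ∏ i, b i) * (∏ i, b i)⁻¹ * C := by
    rw [hHcol, Matrix.det_updateCol_add, term1, term2]
    have hNa : (∏ k : Fin n, (0 - a k.castSucc)) = (-1)^n * ∏ k : Fin n, a k.castSucc := by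
      have h1 : ∀ k : Fin n, (0 - a k.castSucc) = -1 * a k.castSucc := fun k => by ring
      rw [Finset.prod_congr rfl (fun k _ => h1 k), Finset.prod_mul_distrib, Finset.prod_const]
      simp
    have hNb : (∏ j : Fin n, (0 - b j.castSucc)) = (-1)^n * ∏ j : Fin n, b j.castSucc := by
      have h1 : ∀ j : Fin n, (0 - b j.castSucc) = -1 * b j.castSucc := fun j => by ring
      rw [Finset.prod_congr rfl (fun j _ => h1 j), Finset.prod_mul_distrib, Finset.prod_const]
      simp
    have hpa : (∏ i : Fin (n+1), a i) = (∏ k : Fin n, a k.castSucc) * a L := by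
      rw [Fin.prod_univ_castSucc]
    have hpb : (∏ i : Fin (n+1), b i) = (∏ j : Fin n, b j.castSucc) * b L := by
      rw [Fin.prod_univ_castSucc]
    rw [hNa, hNb, hpa, hpb]
    have hpb0 : (∏ j : Fin n, b j.castSucc) ≠ 0 :=
      Finset.prod_ne_zero_iff.mpr fun j _ => hb _
    have hm1 : ((-1 : ℂ))^n ≠ 0 := pow_ne_zero _ (by norm_num)
    field_simp [hb L, hpb0, hm1]
  have hCval : C = (∏ i : Fin n, ∏ j ∈ Ioi i, ((a i.castSucc - a j.castSucc) * (b j.castSucc - b i.castSucc))) /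
      (∏ i : Fin n, ∏ j : Fin n, (a i.castSucc - b j.castSucc)) := by
    rw [hC, show (Matrix.of fun j k : Fin n => (a k.castSucc - b j.castSucc)⁻¹) =
        (Matrix.of fun j k : Fin n => ((a ∘ Fin.castSucc) k - (b ∘ Fin.castSucc) j)⁻¹) from rfl,
      cauchy_det n (a ∘ Fin.castSucc) (b ∘ Fin.castSucc) (fun i j => hab _ _)]
    simp only [Function.comp_apply]
  rw [step1, step2, stepH, hCval]
  -- products of the scaling factors
  have hvprod : (∏ i, v i) = (∏ i : Fin (n+1), b i) *
      ((∏ j : Fin n, (a L - b j.castSucc)) * (a L - b L))⁻¹ := by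
    rw [hv, Finset.prod_mul_distrib]
    congr 1
    rw [mul_inv, ← Finset.prod_inv_distrib,
      ← Fin.prod_univ_castSucc (f := fun j => (a L - b j)⁻¹)]
  have huprod : (∏ i, u i) = 2^n * ∏ k : Fin n, (a L - a k.castSucc) := by
    rw [hu, Fin.prod_univ_castSucc]
    simp only [(Fin.castSucc_lt_last _).ne, hL, if_false, if_pos rfl, mul_one]
    rw [Finset.prod_mul_distrib, Finset.prod_const]
    simp
  have hwprod : (∏ i, w i) = ∏ j : Fin n, (b j.castSucc - b L) := by
    rw [hw, Fin.prod_univ_castSucc]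
    simp [(Fin.castSucc_lt_last _).ne, hL]
  have hzprod : (∏ i, z i) = (∏ k : Fin n, (a k.castSucc - b L))⁻¹ := by
    rw [hz, Fin.prod_univ_castSucc,
      Finset.prod_congr rfl (fun (i : Fin n) _ =>
        if_neg (Fin.castSucc_lt_last i).ne : ∀ i ∈ Finset.univ, _ = (a i.castSucc - b L)⁻¹),
      Finset.prod_inv_distrib]
    simp [hL]
  rw [hvprod, huprod, hwprod, hzprod]
  -- split target products
  rw [prod_pairs_succ (fun i j => (a i - a j) * (b j - b i))]
  have hden : (∏ i : Fin (n+1), ∏ j : Fin (n+1), (a i - b j)) =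
      ((∏ i : Fin n, ∏ j : Fin n, (a i.castSucc - b j.castSucc)) *
        (∏ i : Fin n, (a i.castSucc - b L))) *
        ((∏ j : Fin n, (a L - b j.castSucc)) * (a L - b L)) := by
    rw [Fin.prod_univ_castSucc (f := fun i => ∏ j : Fin (n+1), (a i - b j))]
    rw [Fin.prod_univ_castSucc (f := fun j => (a L - b j))]
    rw [← Finset.prod_mul_distrib]
    congr 1
    exact Finset.prod_congr rfl fun i _ => by
      rw [Fin.prod_univ_castSucc (f := fun j => (a i.castSucc - b j))]
  rw [hden]
  set P := ∏ i : Fin n, ∏ j ∈ Ioi i, ((a i.castSucc - a j.castSucc) * (b j.castSucc - b i.castSucc)) with hP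
  set Q := ∏ i : Fin n, ∏ j : Fin n, (a i.castSucc - b j.castSucc) with hQ
  set A1 := ∏ k : Fin n, (a L - a k.castSucc) with hA1
  set W1 := ∏ j : Fin n, (b j.castSucc - b L) with hW1
  set Z1 := ∏ k : Fin n, (a k.castSucc - b L) with hZ1
  set X1 := ∏ j : Fin n, (a L - b j.castSucc) with hX1
  have hpair : (∏ i : Fin n, ((a i.castSucc - a L) * (b L - b i.castSucc))) = A1 * W1 := by
    rw [hA1, hW1, ← Finset.prod_mul_distrib]
    exact Finset.prod_congr rfl fun i _ => by ring
  rw [hpair]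
  have hQ0 : Q ≠ 0 := Finset.prod_ne_zero_iff.mpr fun i _ =>
    Finset.prod_ne_zero_iff.mpr fun j _ => hsub _ _
  have hZ0 : Z1 ≠ 0 := Finset.prod_ne_zero_iff.mpr fun i _ => hsub _ _
  have hX0 : X1 ≠ 0 := Finset.prod_ne_zero_iff.mpr fun i _ => hsub _ _
  have hlast : a L - b L ≠ 0 := hsub _ _
  have hpb : (∏ i : Fin (n+1), b i) ≠ 0 := Finset.prod_ne_zero_iff.mpr fun i _ => hb _
  field_simp

lemma swap_Ioi_Iio {M : Type*} [CommMonoid M] {N : ℕ} (g : Fin N → Fin N → M) :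
    ∏ i, ∏ j ∈ Ioi i, g i j = ∏ j, ∏ i ∈ Iio j, g i j := by
  apply Finset.prod_comm'
  intro i j
  simp [Finset.mem_Ioi, Finset.mem_Iio]

lemma pairProd {N : ℕ} (g : Fin N → ℂ) :
    ∏ i, ∏ j ∈ Ioi i, (g i * g j) = (∏ i, g i) ^ (N - 1) := by
  calc ∏ i, ∏ j ∈ Ioi i, (g i * g j)
      = ∏ i, (g i ^ (Ioi i).card * ∏ j ∈ Ioi i, g j) :=
        Finset.prod_congr rfl (fun i _ => by rw [Finset.prod_mul_distrib, Finset.prod_const])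
    _ = (∏ i, g i ^ (Ioi i).card) * ∏ i, ∏ j ∈ Ioi i, g j := Finset.prod_mul_distrib
    _ = (∏ i, g i ^ (Ioi i).card) * ∏ j, g j ^ (Iio j).card := by
        rw [swap_Ioi_Iio (fun i j => g j)]
        exact congrArg _ (Finset.prod_congr rfl fun j _ => (Finset.prod_const _))
    _ = ∏ i, g i ^ ((Ioi i).card + (Iio i).card) := by
        rw [← Finset.prod_mul_distrib]
        exact Finset.prod_congr rfl fun i _ => (pow_add _ _ _).symm
    _ = ∏ i, g i ^ (N - 1) := Finset.prod_congr rfl fun i _ => by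
        rw [Fin.card_Ioi, Fin.card_Iio]
        congr 1
        have := i.isLt
        omega
    _ = (∏ i, g i) ^ (N - 1) := Finset.prod_pow _ _ g


end Aux

set_option maxHeartbeats 2000000 in
/-- Cauchy-type determinant evaluation for `coth((x_k − y_j)/2)`. -/
theorem cauchy_coth_det (N : ℕ) (hN : 1 ≤ N) (x y : Fin N → ℂ)
    (hxy : ∀ i j, Complex.sinh ((x i - y j) / 2) ≠ 0) :
    Matrix.det (Matrix.of (fun j k : Fin N => coth ((x k - y j) / 2))) =
      Complex.cosh ((∑ l, (x l - y l)) / 2) *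
        (∏ i : Fin N, ∏ j ∈ Finset.Ioi i,
          (Complex.sinh ((x i - x j) / 2) * Complex.sinh ((y j - y i) / 2))) /
        ∏ i : Fin N, ∏ j : Fin N, Complex.sinh ((x i - y j) / 2) := by
  obtain ⟨n, rfl⟩ : ∃ n, N = n + 1 := ⟨N - 1, by omega⟩
  set s : Fin (n+1) → ℂ := fun i => Complex.exp (x i / 2) with hs_def
  set t : Fin (n+1) → ℂ := fun j => Complex.exp (y j / 2) with ht_def
  have hs : ∀ i, s i ≠ 0 := fun i => Complex.exp_ne_zero _
  have ht : ∀ j, t j ≠ 0 := fun j => Complex.exp_ne_zero _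
  set A : Fin (n+1) → ℂ := fun i => s i ^ 2 with hA_def
  set B : Fin (n+1) → ℂ := fun j => t j ^ 2 with hB_def
  have key : ∀ p q : ℂ, Complex.sinh ((p - q)/2) =
      (Complex.exp (p/2) ^ 2 - Complex.exp (q/2) ^ 2) *
        (2 * Complex.exp (p/2) * Complex.exp (q/2))⁻¹ := by
    intro p q
    rw [show (p - q)/2 = p/2 - q/2 by ring]
    simp only [Complex.sinh, neg_sub, Complex.exp_sub]
    have h1 := Complex.exp_ne_zero (p/2)
    have h2 := Complex.exp_ne_zero (q/2)
    field_simp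
  have keyc : ∀ p q : ℂ, Complex.cosh ((p - q)/2) =
      (Complex.exp (p/2) ^ 2 + Complex.exp (q/2) ^ 2) *
        (2 * Complex.exp (p/2) * Complex.exp (q/2))⁻¹ := by
    intro p q
    rw [show (p - q)/2 = p/2 - q/2 by ring]
    simp only [Complex.cosh, neg_sub, Complex.exp_sub]
    have h1 := Complex.exp_ne_zero (p/2)
    have h2 := Complex.exp_ne_zero (q/2)
    field_simp
  have hsinh : ∀ i j, Complex.sinh ((x i - y j)/2) = (A i - B j) * (2 * s i * t j)⁻¹ :=
    fun i j => key (x i) (y j)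
  have hsinhx : ∀ i j, Complex.sinh ((x i - x j)/2) = (A i - A j) * (2 * s i * s j)⁻¹ :=
    fun i j => key (x i) (x j)
  have hsinhy : ∀ i j, Complex.sinh ((y i - y j)/2) = (B i - B j) * (2 * t i * t j)⁻¹ :=
    fun i j => key (y i) (y j)
  have hABne : ∀ i j, A i ≠ B j := by
    intro i j h
    apply hxy i j
    rw [hsinh i j, h, sub_self, zero_mul]
  have hABsub : ∀ i j, A i - B j ≠ 0 := fun i j => sub_ne_zero.mpr (hABne i j)
  have hB0 : ∀ j, B j ≠ 0 := fun j => pow_ne_zero _ (ht j)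
  have hps : (∏ i, s i) ≠ 0 := Finset.prod_ne_zero_iff.mpr fun i _ => hs i
  have hpt : (∏ i, t i) ≠ 0 := Finset.prod_ne_zero_iff.mpr fun i _ => ht i
  -- cosh of the sum
  have hcosh : Complex.cosh ((∑ l, (x l - y l))/2) =
      ((∏ i, s i)^2 + (∏ i, t i)^2) * (2 * (∏ i, s i) * (∏ i, t i))⁻¹ := by
    have e0 : (∑ l, (x l - y l))/2 = ∑ l, (x l/2 - y l/2) := by
      rw [Finset.sum_div]
      exact Finset.sum_congr rfl fun l _ => by ring
    have h1 : Complex.exp (∑ l, (x l/2 - y l/2)) = (∏ l, s l) * (∏ l, t l)⁻¹ := by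
      rw [Complex.exp_sum]
      have : ∀ l : Fin (n+1), l ∈ Finset.univ →
          Complex.exp (x l/2 - y l/2) = s l * (t l)⁻¹ := by
        intro l _
        rw [Complex.exp_sub, div_eq_mul_inv]
        try rfl
      rw [Finset.prod_congr rfl this, Finset.prod_mul_distrib, Finset.prod_inv_distrib]
    have h2 : Complex.exp (-∑ l, (x l/2 - y l/2)) = (∏ l, t l) * (∏ l, s l)⁻¹ := by
      rw [Complex.exp_neg, h1, mul_inv, inv_inv]
      ring
    rw [e0]
    simp only [Complex.cosh]
    rw [h1, h2]
    field_simp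
  -- the determinant
  have hdet : Matrix.det (Matrix.of (fun j k : Fin (n+1) => coth ((x k - y j) / 2))) =
      2 ^ n * ((∏ i, A i) + ∏ i, B i) *
        (∏ i, ∏ j ∈ Ioi i, ((A i - A j) * (B j - B i))) /
        (∏ i, ∏ j, (A i - B j)) := by
    have hc : ∀ j k : Fin (n+1), coth ((x k - y j)/2) = (A k + B j) / (A k - B j) := by
      intro j k
      have hcc : Complex.cosh ((x k - y j)/2) = (A k + B j) * (2 * s k * t j)⁻¹ :=
        keyc (x k) (y j)
      rw [coth, hcc, hsinh k j]
      rw [mul_comm (A k + B j) _, mul_comm (A k - B j) _, mul_div_mul_left]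
      exact inv_ne_zero (by simp [hs k, ht j])
    rw [show (Matrix.of (fun j k : Fin (n+1) => coth ((x k - y j) / 2))) =
        (Matrix.of (fun j k : Fin (n+1) => (A k + B j) / (A k - B j))) from by
      ext j k; exact hc j k]
    exact coth_det_algebraic n A B hB0 hABne
  rw [hdet, hcosh]
  -- rewrite the RHS products
  set g : Fin (n+1) → ℂ := fun i => 2 * s i * t i with hg
  have hpairs : (∏ i, ∏ j ∈ Ioi i,
      (Complex.sinh ((x i - x j) / 2) * Complex.sinh ((y j - y i) / 2))) =
      (∏ i, ∏ j ∈ Ioi i, ((A i - A j) * (B j - B i))) *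
        ((∏ i, g i) ^ n)⁻¹ := by
    have e1 : ∀ i : Fin (n+1), ∀ j : Fin (n+1),
        Complex.sinh ((x i - x j) / 2) * Complex.sinh ((y j - y i) / 2) =
          ((A i - A j) * (B j - B i)) * (g i * g j)⁻¹ := by
      intro i j
      rw [hsinhx i j, hsinhy j i, hg]
      have h1 := hs i; have h2 := hs j; have h3 := ht i; have h4 := ht j
      field_simp
      try ring
      try exact Or.inl trivial
    calc (∏ i, ∏ j ∈ Ioi i,
        (Complex.sinh ((x i - x j) / 2) * Complex.sinh ((y j - y i) / 2)))
        = ∏ i, ∏ j ∈ Ioi i, (((A i - A j) * (B j - B i)) * (g i * g j)⁻¹) :=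
          Finset.prod_congr rfl fun i _ => Finset.prod_congr rfl fun j _ => e1 i j
      _ = (∏ i, ∏ j ∈ Ioi i, ((A i - A j) * (B j - B i))) *
            ∏ i, ∏ j ∈ Ioi i, (g i * g j)⁻¹ := by
          rw [← Finset.prod_mul_distrib]
          exact Finset.prod_congr rfl fun i _ => Finset.prod_mul_distrib
      _ = (∏ i, ∏ j ∈ Ioi i, ((A i - A j) * (B j - B i))) * ((∏ i, g i) ^ n)⁻¹ := by
          congr 1
          calc ∏ i, ∏ j ∈ Ioi i, (g i * g j)⁻¹
              = ∏ i, ∏ j ∈ Ioi i, ((g i)⁻¹ * (g j)⁻¹) :=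
                Finset.prod_congr rfl fun i _ =>
                  Finset.prod_congr rfl fun j _ => mul_inv _ _
            _ = (∏ i, (g i)⁻¹) ^ (n + 1 - 1) := pairProd _
            _ = ((∏ i, g i) ^ n)⁻¹ := by
                rw [Finset.prod_inv_distrib, inv_pow]
                norm_num
  rw [hpairs]
  have hQsplit : (∏ i, ∏ j, Complex.sinh ((x i - y j)/2)) =
      (∏ i, ∏ j, (A i - B j)) *
        (((2^(n+1) * ∏ i, s i)^(n+1)) * ((∏ i, t i)^(n+1)))⁻¹ := by
    calc ∏ i, ∏ j, Complex.sinh ((x i - y j)/2)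
        = ∏ i, ∏ j, ((A i - B j) * (2 * s i * t j)⁻¹) :=
          Finset.prod_congr rfl fun i _ => Finset.prod_congr rfl fun j _ => hsinh i j
      _ = (∏ i, ∏ j, (A i - B j)) * ∏ i, ∏ j, (2 * s i * t j)⁻¹ := by
          rw [← Finset.prod_mul_distrib]
          exact Finset.prod_congr rfl fun i _ => Finset.prod_mul_distrib
      _ = (∏ i, ∏ j, (A i - B j)) *
            (((2^(n+1) * ∏ i, s i)^(n+1)) * ((∏ i, t i)^(n+1)))⁻¹ := by
          congr 1
          have inner : ∀ i : Fin (n+1), (∏ j, (2 * s i * t j)) =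
              (2 * s i)^(n+1) * ∏ j, t j := by
            intro i
            rw [show (fun j => 2 * s i * t j) = fun j => (2 * s i) * t j from rfl]
            rw [Finset.prod_mul_distrib, Finset.prod_const]
            simp
          calc ∏ i, ∏ j, (2 * s i * t j)⁻¹
              = ∏ i, (∏ j, (2 * s i * t j))⁻¹ :=
                Finset.prod_congr rfl fun i _ => Finset.prod_inv_distrib _
            _ = (∏ i, ∏ j, (2 * s i * t j))⁻¹ := Finset.prod_inv_distrib _
            _ = (∏ i, ((2 * s i)^(n+1) * ∏ j, t j))⁻¹ := by
                rw [Finset.prod_congr rfl fun i _ => inner i]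
            _ = (((2^(n+1) * ∏ i, s i)^(n+1)) * ((∏ i, t i)^(n+1)))⁻¹ := by
                rw [Finset.prod_mul_distrib, Finset.prod_const, Finset.prod_pow,
                  Finset.prod_mul_distrib, Finset.prod_const]
                simp [Finset.card_univ, mul_pow]
  rw [hQsplit]
  have hprodA : (∏ i, A i) = (∏ i, s i)^2 := by
    rw [hA_def, Finset.prod_pow]
  have hprodB : (∏ i, B i) = (∏ i, t i)^2 := by
    rw [hB_def, Finset.prod_pow]
  have hprodg : (∏ i, g i) = 2^(n+1) * (∏ i, s i) * (∏ i, t i) := by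
    rw [hg, Finset.prod_mul_distrib, Finset.prod_mul_distrib, Finset.prod_const]
    simp [Finset.card_univ]
  rw [hprodA, hprodB, hprodg]
  set σ := ∏ i, s i with hσ
  set τ := ∏ i, t i with hτ
  set V := ∏ i, ∏ j ∈ Ioi i, ((A i - A j) * (B j - B i)) with hV
  set W := ∏ i, ∏ j, (A i - B j) with hW
  have hW0 : W ≠ 0 := Finset.prod_ne_zero_iff.mpr fun i _ =>
    Finset.prod_ne_zero_iff.mpr fun j _ => hABsub i j
  have h2 : (2:ℂ) ≠ 0 := two_ne_zero
  have e1 : (2^(n+1) * σ * τ)^n = 2^((n+1)*n) * σ^n * τ^n := by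
    rw [mul_pow, mul_pow, ← pow_mul]
  have e2 : (2^(n+1) * σ)^(n+1) = 2^((n+1)*(n+1)) * σ^(n+1) := by
    rw [mul_pow, ← pow_mul]
  rw [e1, e2]
  have hpow1 : (2:ℂ)^((n+1)*n) ≠ 0 := pow_ne_zero _ h2
  have hσ0 : σ ≠ 0 := hps
  have hτ0 : τ ≠ 0 := hpt
  have halg : ∀ (S V W P1 P2 c d : ℂ), W ≠ 0 → P1 ≠ 0 → c ≠ 0 → d ≠ 0 →
      P2 = c * P1 * d →
      d * S * V / W = S * c⁻¹ * (V * P1⁻¹) / (W * P2⁻¹) := by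
    intro S V W P1 P2 c d hW hP1 hc hd hP2
    subst hP2
    field_simp
  exact halg (σ^2 + τ^2) V W (2^((n+1)*n) * σ^n * τ^n)
    (2^((n+1)*(n+1)) * σ^(n+1) * τ^(n+1)) (2*σ*τ) (2^n)
    hW0 (mul_ne_zero (mul_ne_zero hpow1 (pow_ne_zero _ hσ0)) (pow_ne_zero _ hτ0)) (mul_ne_zero (mul_ne_zero h2 hσ0) hτ0) (pow_ne_zero _ h2)
    (by rw [pow_succ σ, pow_succ τ,
          show ((n+1) * (n+1)) = (1 + (n+1)*n) + n by ring, pow_add, pow_add]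
        ring)
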